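/- For the single von Neumann measurement with Gaussian pointer, the observational entropy S^sm = -∫ p_x ln(p_x/V_x) dx, with p_x = ∑_μ p_μ g_Ω(x−κμ) and V_x = ∑_μ V_μ g_Ω(x−κμ), satisfies S^pm ≤ S^sm, where S^pm = -∑_μ p_μ ln(p_μ/V_μ). -/

import Mathlib

open MeasureTheory

/-- The Gaussian density with mean `0` and standard deviation `Ω`. -/
noncomputable def gaussianDensity (Ω x : ℝ) : ℝ :=
  (Real.sqrt (2 * Real.pi * Ω ^ 2))⁻¹ * Real.exp (-(x ^ 2) / (2 * Ω ^ 2))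

lemma gaussianDensity_pos {Ω : ℝ} (hΩ : 0 < Ω) (x : ℝ) : 0 < gaussianDensity Ω x := by
  unfold gaussianDensity
  have h : 0 < 2 * Real.pi * Ω ^ 2 := by positivity
  positivity

lemma gaussianDensity_eq_pdf {Ω : ℝ} (hΩ : 0 < Ω) (m : ℝ) :
    (fun x => gaussianDensity Ω (x - m))
      = ProbabilityTheory.gaussianPDFReal m ⟨Ω ^ 2, sq_nonneg Ω⟩ := by
  ext x
  simp [gaussianDensity, ProbabilityTheory.gaussianPDFReal]
  rfl

lemma integrable_gaussianDensity {Ω : ℝ} (hΩ : 0 < Ω) (m : ℝ) :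
    Integrable (fun x => gaussianDensity Ω (x - m)) := by
  rw [gaussianDensity_eq_pdf hΩ]
  exact ProbabilityTheory.integrable_gaussianPDFReal _ _

lemma integral_gaussianDensity {Ω : ℝ} (hΩ : 0 < Ω) (m : ℝ) :
    ∫ x : ℝ, gaussianDensity Ω (x - m) = 1 := by
  rw [gaussianDensity_eq_pdf hΩ]
  refine ProbabilityTheory.integral_gaussianPDFReal_eq_one m ?_
  intro h
  have : (Ω : ℝ) ^ 2 = 0 := congrArg Subtype.val h
  nlinarith

lemma continuous_gaussianDensity (Ω m : ℝ) :
    Continuous (fun x => gaussianDensity Ω (x - m)) := by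
  unfold gaussianDensity
  fun_prop

/-- Pointwise piece of the log-sum inequality. -/
lemma atom_log_ineq {a b c : ℝ} (ha : 0 ≤ a) (hb : 0 < b) (hc : 0 < c) :
    a * Real.log c + a - b * c ≤ a * Real.log (a / b) := by
  rcases eq_or_lt_of_le ha with h | h
  · simp only [← h, zero_mul, zero_add, zero_sub, neg_nonpos]
    positivity
  · have hbc : 0 < b * c := by positivity
    have hlog : Real.log (b * c / a) ≤ b * c / a - 1 :=
      Real.log_le_sub_one_of_pos (by positivity)
    have h1 : Real.log (b * c / a) = Real.log b + Real.log c - Real.log a := by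
      rw [Real.log_div hbc.ne' h.ne', Real.log_mul hb.ne' hc.ne']
    have h2 : Real.log (a / b) = Real.log a - Real.log b :=
      Real.log_div h.ne' hb.ne'
    have h3 : a * (b * c / a) = b * c := by field_simp
    nlinarith [mul_le_mul_of_nonneg_left hlog ha]

/-- The log-sum inequality. -/
lemma log_sum_inequality {ι : Type*} [Fintype ι] (a b : ι → ℝ)
    (ha : ∀ i, 0 ≤ a i) (hb : ∀ i, 0 < b i) (hA : 0 < ∑ i, a i) :
    (∑ i, a i) * Real.log ((∑ i, a i) / (∑ i, b i))
      ≤ ∑ i, a i * Real.log (a i / b i) := by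
  have hne : Nonempty ι := by
    rcases isEmpty_or_nonempty ι with h | h
    · simp at hA
    · exact h
  set A := ∑ i, a i with hAdef
  set B := ∑ i, b i with hBdef
  have hB : 0 < B := Finset.sum_pos (fun i _ => hb i) Finset.univ_nonempty
  have key : ∀ i, a i * Real.log (A / B) + a i - b i * (A / B)
      ≤ a i * Real.log (a i / b i) :=
    fun i => atom_log_ineq (ha i) (hb i) (by positivity)
  have hsum : ∑ i, (a i * Real.log (A / B) + a i - b i * (A / B))
      = A * Real.log (A / B) := by
    rw [Finset.sum_sub_distrib, Finset.sum_add_distrib, ← Finset.sum_mul,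
      ← Finset.sum_mul, ← hAdef, ← hBdef]
    field_simp
    ring
  calc A * Real.log (A / B)
      = ∑ i, (a i * Real.log (A / B) + a i - b i * (A / B)) := hsum.symm
    _ ≤ ∑ i, a i * Real.log (a i / b i) :=
        Finset.sum_le_sum fun i _ => key i

/-- For the single von Neumann measurement with a Gaussian pointer, the observational
entropy `S^sm = -∫ p_x ln (p_x / V_x) dx`, with `p_x = ∑ μ, p μ * g_Ω (x - κ μ)` and
`V_x = ∑ μ, V μ * g_Ω (x - κ μ)`, dominates the projective-measurement entropy
`S^pm = -∑ μ, p μ ln (p μ / V μ)`. -/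
theorem projective_entropy_le_single_measurement_entropy
    {ι : Type*} [Fintype ι]
    (μ : ι → ℝ) (hμ : Function.Injective μ)
    (p V : ι → ℝ)
    (hp : ∀ i, 0 ≤ p i) (hpsum : ∑ i, p i = 1)
    (hV : ∀ i, 0 < V i)
    (Ω κ : ℝ) (hΩ : 0 < Ω) :
    -∑ i, p i * Real.log (p i / V i)
      ≤ -∫ x : ℝ,
          (∑ i, p i * gaussianDensity Ω (x - κ * μ i)) *
            Real.log ((∑ i, p i * gaussianDensity Ω (x - κ * μ i)) /
              (∑ i, V i * gaussianDensity Ω (x - κ * μ i))) := by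
  classical
  have hne : Nonempty ι := by
    rcases isEmpty_or_nonempty ι with h | h
    · simp at hpsum
    · exact h
  set g : ι → ℝ → ℝ := fun i x => gaussianDensity Ω (x - κ * μ i) with hgdef
  have hgpos : ∀ i x, 0 < g i x := fun i x => gaussianDensity_pos hΩ _
  set P : ℝ → ℝ := fun x => ∑ i, p i * g i x with hPdef
  set Q : ℝ → ℝ := fun x => ∑ i, V i * g i x with hQdef
  have hP : ∀ x, 0 < P x := by
    intro x
    have hex : ∃ i ∈ Finset.univ (α := ι), 0 < p i := by
      by_contra hcon
      push_neg at hcon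
      have : ∑ i, p i = 0 := Finset.sum_eq_zero fun i hi =>
        le_antisymm (hcon i hi) (hp i)
      rw [hpsum] at this; norm_num at this
    obtain ⟨i, _, hi⟩ := hex
    exact Finset.sum_pos' (fun j _ => mul_nonneg (hp j) (hgpos j x).le)
      ⟨i, Finset.mem_univ i, mul_pos hi (hgpos i x)⟩
  have hQ : ∀ x, 0 < Q x :=
    fun x => Finset.sum_pos (fun i _ => mul_pos (hV i) (hgpos i x)) Finset.univ_nonempty
  -- pointwise upper bound by the log-sum inequality
  have hpt : ∀ x, P x * Real.log (P x / Q x)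
      ≤ ∑ i, (p i * Real.log (p i / V i)) * g i x := by
    intro x
    have h1 := log_sum_inequality (fun i => p i * g i x) (fun i => V i * g i x)
      (fun i => mul_nonneg (hp i) (hgpos i x).le)
      (fun i => mul_pos (hV i) (hgpos i x)) (hP x)
    refine h1.trans_eq (Finset.sum_congr rfl fun i _ => ?_)
    rw [mul_div_mul_right _ _ (hgpos i x).ne']
    ring
  -- pointwise lower bound
  have hlow : ∀ x, P x - Q x ≤ P x * Real.log (P x / Q x) := by
    intro x
    have := atom_log_ineq (hP x).le (hQ x) one_pos
    simpa using this
  -- integrability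
  have hgint : ∀ i, Integrable (fun x => g i x) := fun i => integrable_gaussianDensity hΩ _
  have hGint : Integrable (fun x => ∑ i, (p i * Real.log (p i / V i)) * g i x) :=
    integrable_finset_sum _ (fun i _ => ((hgint i).const_mul _))
  have hPint : Integrable P :=
    integrable_finset_sum _ (fun i _ => ((hgint i).const_mul _))
  have hQint : Integrable Q :=
    integrable_finset_sum _ (fun i _ => ((hgint i).const_mul _))
  have hPcont : Continuous P :=
    continuous_finset_sum _ fun i _ => continuous_const.mul (continuous_gaussianDensity Ω (κ * μ i))
  have hQcont : Continuous Q :=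
    continuous_finset_sum _ fun i _ => continuous_const.mul (continuous_gaussianDensity Ω (κ * μ i))
  have hFcont : Continuous (fun x => P x * Real.log (P x / Q x)) := by
    exact hPcont.mul ((hPcont.div hQcont fun x => (hQ x).ne').log
      fun x => (div_pos (hP x) (hQ x)).ne')
  have hFint : Integrable (fun x => P x * Real.log (P x / Q x)) :=
    integrable_of_le_of_le hFcont.aestronglyMeasurable
      (Filter.Eventually.of_forall hlow) (Filter.Eventually.of_forall hpt)
      (hPint.sub hQint) hGint
  have hle : ∫ x, P x * Real.log (P x / Q x)
      ≤ ∫ x, ∑ i, (p i * Real.log (p i / V i)) * g i x :=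
    integral_mono hFint hGint hpt
  have hG : ∫ x, ∑ i, (p i * Real.log (p i / V i)) * g i x
      = ∑ i, p i * Real.log (p i / V i) := by
    rw [integral_finset_sum _ (fun i _ => ((hgint i).const_mul _))]
    refine Finset.sum_congr rfl fun i _ => ?_
    rw [integral_const_mul, integral_gaussianDensity hΩ, mul_one]
  have : ∫ x, P x * Real.log (P x / Q x) ≤ ∑ i, p i * Real.log (p i / V i) :=
    hle.trans_eq hG
  linarith
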